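/- Let G be a greedy numeration system basis and let N ∈ ℕ with G_k ≤ N < G_{k+1} and N < G_{k+1} − 1. Then the carry propagation of N in the G-system equals the carry propagation of N mod G_k: cp_G(N) = cp_G(N mod G_k). -/
import Mathlib


open Filter Topology

/-- Remainders of the greedy algorithm for the basis `G`, run top-down from
position `N - 1` (for `N < G N`, all digits of `N` lie below position `N`):
`greedyRem G N t` is the part of `N` remaining to be represented on the
positions `< N - t`. -/
def greedyRem (G : ℕ → ℕ) (N : ℕ) : ℕ → ℕ
  | 0 => N
  | t + 1 => greedyRem G N t % G (N - t - 1)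

/-- The digit at position `j` (least significant digit at position `0`) of the
greedy `G`-expansion of `N`, padded with zeros. -/
def greedyDigit (G : ℕ → ℕ) (N j : ℕ) : ℕ :=
  if j < N then greedyRem G N (N - 1 - j) / G j else 0

/-- Length of the longest common prefix of two words. -/
def lcpLen : List ℕ → List ℕ → ℕ
  | a :: u, b :: v => if a = b then lcpLen u v + 1 else 0
  | _, _ => 0

/-- `Delta u v`: if `|u| = |v|`, the length of `u` minus the length of the longest
common prefix of `u` and `v`; otherwise `max |u| |v|` (padding convention). -/
def Delta (u v : List ℕ) : ℕ :=
  if u.length = v.length then u.length - lcpLen u v else max u.length v.length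

/-- Number of digits of the greedy `G`-expansion of `N`: the least `ℓ` with
`N < G ℓ`. -/
noncomputable def greedyLen (G : ℕ → ℕ) (N : ℕ) : ℕ := sInf {ℓ | N < G ℓ}

/-- The greedy `G`-expansion of `N`, most significant digit first. -/
noncomputable def greedyRep (G : ℕ → ℕ) (N : ℕ) : List ℕ :=
  ((List.range (greedyLen G N)).map (greedyDigit G N)).reverse

/-- Carry propagation at `N` in the greedy numeration system `G`. -/
noncomputable def greedyCp (G : ℕ → ℕ) (N : ℕ) : ℕ :=
  Delta (greedyRep G N) (greedyRep G (N + 1))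

section Aux

variable {G : ℕ → ℕ}

lemma lt_apply_of_strictMono (hG : StrictMono G) (hG0 : G 0 = 1) (n : ℕ) : n < G n := by
  induction n with
  | zero => omega
  | succ m ih =>
    have h2 : G m < G (m + 1) := hG (by omega)
    omega

lemma rem_stab (hG : StrictMono G) (x : ℕ) :
    ∀ t, x < G (x - t) → greedyRem G x t = x := by
  intro t
  induction t with
  | zero => intro _; rfl
  | succ t ih =>
    intro h
    have hle : G (x - (t + 1)) ≤ G (x - t) := hG.monotone (by omega)
    have hx : x < G (x - t) := lt_of_lt_of_le h hle
    show greedyRem G x t % G (x - t - 1) = x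
    rw [ih hx]
    apply Nat.mod_eq_of_lt
    have heq : x - t - 1 = x - (t + 1) := by omega
    rw [heq]
    exact h

lemma rem_of_lt (hG : StrictMono G) {x j : ℕ} (h : x < G j) :
    greedyRem G x (x - j) = x := by
  by_cases hj : j ≤ x
  · apply rem_stab hG
    have : x - (x - j) = j := by omega
    rw [this]; exact h
  · have : x - j = 0 := by omega
    rw [this]; rfl

lemma rem_step {x j : ℕ} (h : j < x) :
    greedyRem G x (x - j) = greedyRem G x (x - (j + 1)) % G j := by
  have h1 : x - j = (x - (j + 1)) + 1 := by omega
  rw [h1]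
  show greedyRem G x (x - (j + 1)) % G (x - (x - (j + 1)) - 1) = _
  have : x - (x - (j + 1)) - 1 = j := by omega
  rw [this]

lemma rem_mod (hG : StrictMono G) (hG0 : G 0 = 1) {k x : ℕ}
    (hx : x < G (k + 1)) (hk : k < x) :
    ∀ i, i ≤ k → greedyRem G x (x - (k - i)) =
      greedyRem G (x % G k) (x % G k - (k - i)) := by
  have hM : x % G k < G k := Nat.mod_lt _ (by have := lt_apply_of_strictMono hG hG0 k; omega)
  intro i
  induction i with
  | zero =>
    intro _
    simp only [Nat.sub_zero]
    rw [rem_step (G := G) hk, rem_of_lt hG hx, rem_of_lt hG hM]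
  | succ i ih =>
    intro hik
    set M := x % G k with hMdef
    have hik' : i ≤ k := by omega
    have hj : k - (i + 1) < k := by omega
    set j := k - (i + 1) with hjdef
    have hjk : j + 1 = k - i := by omega
    have hjx : j < x := by omega
    rw [rem_step (G := G) hjx]
    have ihj : greedyRem G x (x - (j + 1)) = greedyRem G M (M - (j + 1)) := by
      rw [hjk]; exact ih hik'
    rw [ihj]
    by_cases hjM : j < M
    · rw [rem_step (G := G) hjM]
    · have h1 : M - j = 0 := by omega
      have h2 : M - (j + 1) = 0 := by omega
      rw [h1, h2]
      show M % G j = M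
      exact Nat.mod_eq_of_lt (lt_of_le_of_lt (by omega)
        (lt_apply_of_strictMono hG hG0 j))

lemma rem_mod' (hG : StrictMono G) (hG0 : G 0 = 1) {k x : ℕ}
    (hx : x < G (k + 1)) (hk : k < x) {j : ℕ} (hj : j ≤ k) :
    greedyRem G x (x - j) = greedyRem G (x % G k) (x % G k - j) := by
  have := rem_mod hG hG0 hx hk (k - j) (by omega)
  have h : k - (k - j) = j := by omega
  rwa [h] at this

lemma digit_lower (hG : StrictMono G) (hG0 : G 0 = 1) {k x : ℕ}
    (hx : x < G (k + 1)) (hk : k < x) {j : ℕ} (hj : j < k) :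
    greedyDigit G x j = greedyDigit G (x % G k) j := by
  set M := x % G k with hMdef
  have hjx : j < x := by omega
  have hnum : greedyRem G x (x - 1 - j) = greedyRem G M (M - (j + 1)) := by
    have h1 : x - 1 - j = x - (j + 1) := by omega
    rw [h1]
    exact rem_mod' hG hG0 hx hk (by omega)
  by_cases hjM : j < M
  · have h2 : M - 1 - j = M - (j + 1) := by omega
    rw [greedyDigit, greedyDigit, if_pos hjx, if_pos hjM, hnum, h2]
  · rw [greedyDigit, greedyDigit, if_pos hjx, if_neg hjM, hnum]
    have h2 : M - (j + 1) = 0 := by omega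
    rw [h2]
    show M / G j = 0
    exact Nat.div_eq_of_lt (lt_of_le_of_lt (by omega) (lt_apply_of_strictMono hG hG0 j))

lemma digit_top (hG : StrictMono G) {k x : ℕ} (hx : x < G (k + 1)) (hk : k < x) :
    greedyDigit G x k = x / G k := by
  rw [greedyDigit, if_pos hk]
  have h1 : x - 1 - k = x - (k + 1) := by omega
  rw [h1, rem_of_lt hG hx]

lemma len_mem (hG : StrictMono G) (hG0 : G 0 = 1) (x : ℕ) :
    x < G (greedyLen G x) :=
  Nat.sInf_mem (⟨x, lt_apply_of_strictMono hG hG0 x⟩ : Set.Nonempty {ℓ | x < G ℓ})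

lemma len_le {x k : ℕ} (h : x < G k) : greedyLen G x ≤ k := Nat.sInf_le h

lemma len_eq (hG : StrictMono G) (hG0 : G 0 = 1) {x k : ℕ}
    (h1 : G k ≤ x) (h2 : x < G (k + 1)) : greedyLen G x = k + 1 := by
  refine le_antisymm (len_le h2) ?_
  by_contra hlt
  have hle : greedyLen G x ≤ k := by omega
  have := len_mem hG hG0 x
  have : G (greedyLen G x) ≤ G k := hG.monotone hle
  omega

lemma digit_of_len_le (hG : StrictMono G) (hG0 : G 0 = 1) {x j : ℕ}
    (h : greedyLen G x ≤ j) : greedyDigit G x j = 0 := by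
  rw [greedyDigit]
  split
  · have hmem := len_mem hG hG0 x
    have hxj : x < G (j + 1) := lt_of_lt_of_le hmem (hG.monotone (by omega))
    have h1 : x - 1 - j = x - (j + 1) := by omega
    rw [h1, rem_of_lt hG hxj]
    exact Nat.div_eq_of_lt (lt_of_lt_of_le hmem (hG.monotone h))
  · rfl

lemma digit_top_ne_zero (hG : StrictMono G) (hG0 : G 0 = 1) {x : ℕ} (hx : 0 < x) :
    greedyDigit G x (greedyLen G x - 1) ≠ 0 := by
  have hmem := len_mem hG hG0 x
  set ℓ := greedyLen G x with hℓ
  have hℓpos : 0 < ℓ := by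
    rcases Nat.eq_zero_or_pos ℓ with h | h
    · rw [h] at hmem; omega
    · exact h
  have hℓx : ℓ ≤ x := len_le (lt_apply_of_strictMono hG hG0 x)
  have hGle : G (ℓ - 1) ≤ x := by
    by_contra hlt
    have hmem2 : (ℓ - 1) ∈ {m | x < G m} := by
      show x < G (ℓ - 1); omega
    have : ℓ ≤ ℓ - 1 := hℓ ▸ Nat.sInf_le hmem2
    omega
  rw [greedyDigit, if_pos (by omega : ℓ - 1 < x)]
  have h1 : x - 1 - (ℓ - 1) = x - ℓ := by omega
  rw [h1]
  have h3 : greedyRem G x (x - ℓ) = x := rem_of_lt hG hmem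
  rw [h3]
  have hpos : 0 < G (ℓ - 1) := by
    have := lt_apply_of_strictMono hG hG0 (ℓ - 1); omega
  have : 0 < x / G (ℓ - 1) := Nat.div_pos hGle hpos
  omega

/-! ### List lemmas -/

lemma lcpLen_le : ∀ u v : List ℕ, lcpLen u v ≤ u.length
  | [], v => by cases v <;> simp [lcpLen]
  | a :: u, [] => by simp [lcpLen]
  | a :: u, b :: v => by
    show (if a = b then lcpLen u v + 1 else 0) ≤ u.length + 1
    split
    · have := lcpLen_le u v; omega
    · omega

lemma lcpLen_cons_same (a : ℕ) (u v : List ℕ) :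
    lcpLen (a :: u) (a :: v) = lcpLen u v + 1 := by
  show (if a = a then lcpLen u v + 1 else 0) = lcpLen u v + 1
  simp

lemma lcpLen_cons_ne {a b : ℕ} (h : a ≠ b) (u v : List ℕ) :
    lcpLen (a :: u) (b :: v) = 0 := by
  show (if a = b then lcpLen u v + 1 else 0) = 0
  simp [h]

lemma lcpLen_append : ∀ (w u v : List ℕ),
    lcpLen (w ++ u) (w ++ v) = w.length + lcpLen u v
  | [], u, v => by simp
  | a :: w, u, v => by
    simp only [List.cons_append, lcpLen_cons_same, lcpLen_append w u v,
      List.length_cons]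
    omega

/-! ### Padded representations -/

/-- Digits of `x` on positions `< n`, most significant first. -/
def pad (G : ℕ → ℕ) (x n : ℕ) : List ℕ :=
  ((List.range n).map (greedyDigit G x)).reverse

lemma pad_length (G : ℕ → ℕ) (x n : ℕ) : (pad G x n).length = n := by
  simp [pad]

lemma pad_succ (G : ℕ → ℕ) (x n : ℕ) :
    pad G x (n + 1) = greedyDigit G x n :: pad G x n := by
  simp [pad, List.range_succ]

lemma rep_eq_pad (G : ℕ → ℕ) (x : ℕ) : greedyRep G x = pad G x (greedyLen G x) := rfl

lemma pad_congr {x y : ℕ} (n : ℕ) (h : ∀ j < n, greedyDigit G x j = greedyDigit G y j) :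
    pad G x n = pad G y n := by
  unfold pad
  congr 1
  apply List.map_congr_left
  intro a ha
  exact h a (List.mem_range.mp ha)

lemma pad_zeros (hG : StrictMono G) (hG0 : G 0 = 1) {x ℓ n : ℕ}
    (hlen : greedyLen G x ≤ ℓ) (hn : ℓ ≤ n) :
    pad G x n = List.replicate (n - ℓ) 0 ++ pad G x ℓ := by
  induction n with
  | zero =>
    have : ℓ = 0 := by omega
    subst this; simp
  | succ n ih =>
    by_cases hℓn : ℓ = n + 1
    · subst hℓn; simp
    · have hℓn' : ℓ ≤ n := by omega
      rw [pad_succ, digit_of_len_le hG hG0 (by omega), ih hℓn']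
      have : n + 1 - ℓ = (n - ℓ) + 1 := by omega
      rw [this, List.replicate_succ, List.cons_append]

end Aux

/-- For a greedy numeration system `G` and `N` with `G_k ≤ N < G_{k+1} - 1`,
the carry propagation at `N` equals the carry propagation at `N mod G_k`. -/
theorem carry_stmt18 (G : ℕ → ℕ) (hG : StrictMono G) (hG0 : G 0 = 1)
    (k N : ℕ) (h1 : G k ≤ N) (h2 : N + 1 < G (k + 1)) :
    greedyCp G N = greedyCp G (N % G k) := by
  have hGk1 : k < G k := lt_apply_of_strictMono hG hG0 k
  have hGkpos : 0 < G k := by omega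
  have hkN : k < N := by omega
  set M := N % G k with hM
  set q := N / G k with hq
  have hMlt : M < G k := Nat.mod_lt _ hGkpos
  have hdm : N = G k * q + M := by rw [hq, hM]; exact (Nat.div_add_mod N (G k)).symm
  have hlenN : greedyLen G N = k + 1 := len_eq hG hG0 h1 (by omega)
  have hlenN1 : greedyLen G (N + 1) = k + 1 := len_eq hG hG0 (by omega) h2
  have hlenrep : ∀ x, (greedyRep G x).length = greedyLen G x := by
    intro x; simp [greedyRep]
  have hrepN : greedyRep G N = q :: pad G M k := by
    rw [rep_eq_pad, hlenN, pad_succ, digit_top hG (by omega) hkN,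
        pad_congr k (fun j hj => digit_lower hG hG0 (by omega) hkN hj)]
  by_cases hcase : M + 1 = G k
  · -- carry out of position k: N + 1 = (q+1) * G k
    have hq' : (N + 1) / G k = q + 1 := by
      have hN1 : N + 1 = G k * (q + 1) := by
        rw [Nat.mul_add, Nat.mul_one]; omega
      rw [hN1, Nat.mul_div_cancel_left _ hGkpos]
    have hrepN1 : greedyRep G (N + 1) = (q + 1) :: pad G (N + 1) k := by
      rw [rep_eq_pad, hlenN1, pad_succ, digit_top hG h2 (by omega), hq']
    have hlenM : greedyLen G M ≤ k := len_le hMlt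
    have hlenM1 : greedyLen G (M + 1) = k + 1 := by
      rw [hcase]; exact len_eq hG hG0 (le_refl _) (hG (Nat.lt_succ_self k))
    rw [greedyCp, greedyCp, hrepN, hrepN1, Delta, Delta]
    rw [if_pos (by simp [pad_length]), if_neg (by rw [hlenrep, hlenrep, hlenM1]; omega)]
    rw [lcpLen_cons_ne (by omega)]
    rw [hlenrep, hlenrep, hlenM1]
    simp [pad_length]
    omega
  · -- no carry out of position k
    have hcase' : M + 1 < G k := by omega
    have hN1 : N + 1 = (M + 1) + G k * q := by omega
    have hmod1 : (N + 1) % G k = M + 1 := by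
      rw [hN1, Nat.add_mul_mod_self_left, Nat.mod_eq_of_lt hcase']
    have hq' : (N + 1) / G k = q := by
      rw [hN1, Nat.add_mul_div_left _ _ hGkpos, Nat.div_eq_of_lt hcase', Nat.zero_add]
    have hrepN1 : greedyRep G (N + 1) = q :: pad G (M + 1) k := by
      rw [rep_eq_pad, hlenN1, pad_succ, digit_top hG h2 (by omega), hq',
          pad_congr k (fun j hj => digit_lower hG hG0 h2 (by omega) hj), hmod1]
    set ℓ := greedyLen G (M + 1) with hℓdef
    set ℓ' := greedyLen G M with hℓ'def
    have hℓk : ℓ ≤ k := len_le hcase'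
    have hℓ'ℓ : ℓ' ≤ ℓ :=
      len_le (lt_trans (Nat.lt_succ_self M) (len_mem hG hG0 (M + 1)))
    have padM : pad G M k = List.replicate (k - ℓ) 0 ++ pad G M ℓ :=
      pad_zeros hG hG0 hℓ'ℓ hℓk
    have padM1 : pad G (M + 1) k = List.replicate (k - ℓ) 0 ++ pad G (M + 1) ℓ :=
      pad_zeros hG hG0 (le_refl _) hℓk
    have hc_le : lcpLen (pad G M ℓ) (pad G (M + 1) ℓ) ≤ ℓ := by
      have := lcpLen_le (pad G M ℓ) (pad G (M + 1) ℓ)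
      rwa [pad_length] at this
    have hLHS : greedyCp G N =
        (k + 1) - ((k - ℓ) + lcpLen (pad G M ℓ) (pad G (M + 1) ℓ) + 1) := by
      rw [greedyCp, hrepN, hrepN1, Delta, if_pos (by simp [pad_length])]
      rw [lcpLen_cons_same, padM, padM1, lcpLen_append]
      simp [pad_length]
      omega
    by_cases hℓeq : ℓ' = ℓ
    · have hrepM : greedyRep G M = pad G M ℓ := by
        rw [rep_eq_pad, ← hℓ'def, hℓeq]
      have hrepM1 : greedyRep G (M + 1) = pad G (M + 1) ℓ := by
        rw [rep_eq_pad, ← hℓdef]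
      rw [hLHS, greedyCp, hrepM, hrepM1, Delta, if_pos (by simp [pad_length]),
          pad_length]
      omega
    · have hℓ'lt : ℓ' < ℓ := lt_of_le_of_ne hℓ'ℓ hℓeq
      have hℓpos : 0 < ℓ := by omega
      have hd0 : greedyDigit G M (ℓ - 1) = 0 :=
        digit_of_len_le hG hG0 (by omega)
      have hd1 : greedyDigit G (M + 1) (ℓ - 1) ≠ 0 := by
        have := digit_top_ne_zero hG hG0 (x := M + 1) (by omega)
        rwa [← hℓdef] at this
      have hc0 : lcpLen (pad G M ℓ) (pad G (M + 1) ℓ) = 0 := by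
        rw [show ℓ = (ℓ - 1) + 1 by omega, pad_succ, pad_succ, hd0]
        exact lcpLen_cons_ne (Ne.symm hd1) _ _
      rw [hLHS, hc0, greedyCp, Delta,
          if_neg (by rw [hlenrep, hlenrep, ← hℓdef, ← hℓ'def]; omega)]
      rw [hlenrep, hlenrep, ← hℓdef, ← hℓ'def]
      omega
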